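/- Let P⁺, P_g, P⁻ be probability measures on X, γ ∈ (0,1], a > 0, and P'_m = γ P_g + (1−γ) P⁻. For D: X → [0,a] measurable, the loss L_D(D) = E_{P⁺}[D] + γ E_{P_g}[a − D] + (1−γ) E_{P⁻}[a − D] equals a + E_{P⁺}[D] − E_{P'_m}[D], and its infimum over all measurable D: X → [0,a] equals a − (a/2)·‖P⁺ − P'_m‖_TV. -/

import Mathlib

open MeasureTheory Set

/-- Total variation norm of a signed measure: `‖μ‖_TV = |μ|(X)`. -/
noncomputable def tv {X : Type*} [MeasurableSpace X] (μ : SignedMeasure X) : ℝ :=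
  (μ.totalVariation Set.univ).toReal

lemma integrable_of_mem_Icc {X : Type*} [MeasurableSpace X] (μ : Measure X) [IsFiniteMeasure μ]
    {D : X → ℝ} {a : ℝ} (hD : Measurable D) (hr : ∀ x, D x ∈ Set.Icc 0 a) :
    Integrable D μ :=
  (integrable_const a).mono' hD.aestronglyMeasurable (Filter.Eventually.of_forall fun x => by
    rw [Real.norm_eq_abs, abs_of_nonneg (hr x).1]; exact (hr x).2)

lemma key_glb {X : Type*} [MeasurableSpace X] (P Q : Measure X)
    [IsProbabilityMeasure P] [IsProbabilityMeasure Q] (a : ℝ) (ha : 0 < a) :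
    IsGLB {v : ℝ | ∃ D : X → ℝ, Measurable D ∧ (∀ x, D x ∈ Set.Icc 0 a) ∧
        v = a + (∫ x, D x ∂P) - ∫ x, D x ∂Q}
      (a - (a / 2) * tv (P.toSignedMeasure - Q.toSignedMeasure)) := by
  set s : SignedMeasure X := P.toSignedMeasure - Q.toSignedMeasure with hs_def
  set p : Measure X := s.toJordanDecomposition.posPart with hp_def
  set n : Measure X := s.toJordanDecomposition.negPart with hn_def
  have hs : p.toSignedMeasure - n.toSignedMeasure = s :=
    s.toSignedMeasure_toJordanDecomposition
  -- pointwise toReal identity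
  have happ : ∀ A : Set X, MeasurableSet A →
      (p A).toReal - (n A).toReal = (P A).toReal - (Q A).toReal := by
    intro A hA
    have h1 := congrArg (fun v : SignedMeasure X => v A) hs
    simp only [hs_def, VectorMeasure.sub_apply,
      Measure.toSignedMeasure_apply_measurable hA] at h1
    exact h1
  -- measure identity P + n = Q + p
  have hmeas : P + n = Q + p := by
    ext A hA
    have h1 := happ A hA
    have h2 : ((P + n) A).toReal = ((Q + p) A).toReal := by
      simp only [Measure.add_apply]
      rw [ENNReal.toReal_add (measure_ne_top _ _) (measure_ne_top _ _),
        ENNReal.toReal_add (measure_ne_top _ _) (measure_ne_top _ _)]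
      linarith
    exact (ENNReal.toReal_eq_toReal_iff' (measure_ne_top _ _) (measure_ne_top _ _)).mp h2
  -- total variation facts
  have huniv : (p Set.univ).toReal = (n Set.univ).toReal := by
    have := happ Set.univ MeasurableSet.univ
    simp [measure_univ] at this
    linarith
  have htv : tv s = (p Set.univ).toReal + (n Set.univ).toReal := by
    rw [tv, SignedMeasure.totalVariation, Measure.add_apply,
      ENNReal.toReal_add (measure_ne_top _ _) (measure_ne_top _ _)]
  have htv2 : (a / 2) * tv s = a * (n Set.univ).toReal := by
    rw [htv, huniv]; ring
  -- integral identity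
  have hint : ∀ D : X → ℝ, Measurable D → (∀ x, D x ∈ Set.Icc 0 a) →
      a + (∫ x, D x ∂P) - ∫ x, D x ∂Q = a + (∫ x, D x ∂p) - ∫ x, D x ∂n := by
    intro D hD hr
    have h1 : (∫ x, D x ∂(P + n)) = ∫ x, D x ∂(Q + p) := by rw [hmeas]
    rw [integral_add_measure (integrable_of_mem_Icc P hD hr) (integrable_of_mem_Icc n hD hr),
      integral_add_measure (integrable_of_mem_Icc Q hD hr)
        (integrable_of_mem_Icc p hD hr)] at h1
    linarith
  constructor
  · -- lower bound
    rintro v ⟨D, hD, hr, rfl⟩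
    rw [hint D hD hr, htv2]
    have h1 : 0 ≤ ∫ x, D x ∂p := integral_nonneg fun x => (hr x).1
    have h2 : (∫ x, D x ∂n) ≤ ∫ _, a ∂n := by
      refine integral_mono (integrable_of_mem_Icc n hD hr) (integrable_const a)
        fun x => (hr x).2
    rw [integral_const, smul_eq_mul, measureReal_def] at h2
    nlinarith [(n Set.univ).toReal]
  · -- the value is attained
    intro b hb
    obtain ⟨B, hB, hpB, hnB⟩ := s.toJordanDecomposition.mutuallySingular
    refine hb ⟨B.indicator fun _ => a, measurable_const.indicator hB, ?_, ?_⟩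
    · intro x
      by_cases hx : x ∈ B <;> simp [Set.indicator_apply, hx, le_of_lt ha]
    · have hnBc : (n B).toReal = (n Set.univ).toReal := by
        have : n Set.univ = n B + n Bᶜ := (measure_add_measure_compl hB).symm
        rw [this, hnB, add_zero]
      rw [hint _ (measurable_const.indicator hB) (fun x => by
          by_cases hx : x ∈ B <;> simp [Set.indicator_apply, hx, le_of_lt ha]),
        integral_indicator_const a hB, integral_indicator_const a hB, measureReal_def,
          measureReal_def, hpB, htv2, hnBc]
      simp only [ENNReal.toReal_zero, zero_smul, add_zero, smul_eq_mul]
      ring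

/-- For `D : X → [0,a]`, `L_D(D) = a + E_{P⁺}[D] - E_{P'_m}[D]` where
`P'_m = γP_g + (1-γ)P⁻`, and `inf_D L_D(D) = a - (a/2)‖P⁺ - P'_m‖_TV`. -/
theorem stmt3 {X : Type*} [MeasurableSpace X] (Pp Pg Pn : Measure X)
    [IsProbabilityMeasure Pp] [IsProbabilityMeasure Pg] [IsProbabilityMeasure Pn]
    (a γ : ℝ) (ha : 0 < a) (hγ : γ ∈ Set.Ioc (0 : ℝ) 1) :
    (∀ D : X → ℝ, Measurable D → (∀ x, D x ∈ Set.Icc 0 a) →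
      (∫ x, D x ∂Pp) + γ * (∫ x, (a - D x) ∂Pg) + (1 - γ) * (∫ x, (a - D x) ∂Pn)
        = a + (∫ x, D x ∂Pp) - (γ * (∫ x, D x ∂Pg) + (1 - γ) * (∫ x, D x ∂Pn))) ∧
    IsGLB {v : ℝ | ∃ D : X → ℝ, Measurable D ∧ (∀ x, D x ∈ Set.Icc 0 a) ∧
        v = (∫ x, D x ∂Pp) + γ * (∫ x, (a - D x) ∂Pg) + (1 - γ) * (∫ x, (a - D x) ∂Pn)}
      (a - (a / 2) * tv (Pp.toSignedMeasure
          - (γ • Pg.toSignedMeasure + (1 - γ) • Pn.toSignedMeasure))) := by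
  obtain ⟨hγ0, hγ1⟩ := hγ
  have hγ0' : 0 ≤ γ := le_of_lt hγ0
  have h1γ : 0 ≤ 1 - γ := by linarith
  -- Part 1
  have part1 : ∀ D : X → ℝ, Measurable D → (∀ x, D x ∈ Set.Icc 0 a) →
      (∫ x, D x ∂Pp) + γ * (∫ x, (a - D x) ∂Pg) + (1 - γ) * (∫ x, (a - D x) ∂Pn)
        = a + (∫ x, D x ∂Pp) - (γ * (∫ x, D x ∂Pg) + (1 - γ) * (∫ x, D x ∂Pn)) := by
    intro D hD hr
    have hg : (∫ x, (a - D x) ∂Pg) = a - ∫ x, D x ∂Pg := by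
      rw [integral_sub (integrable_const a) (integrable_of_mem_Icc Pg hD hr),
        integral_const]; simp
    have hn : (∫ x, (a - D x) ∂Pn) = a - ∫ x, D x ∂Pn := by
      rw [integral_sub (integrable_const a) (integrable_of_mem_Icc Pn hD hr),
        integral_const]; simp
    rw [hg, hn]; ring
  refine ⟨part1, ?_⟩
  -- the mixture measure
  have hQprob : IsProbabilityMeasure (γ.toNNReal • Pg + (1 - γ).toNNReal • Pn) := by
    constructor
    rw [Measure.add_apply, Measure.smul_apply, Measure.smul_apply,
      measure_univ, measure_univ, ENNReal.smul_def, ENNReal.smul_def, smul_eq_mul, smul_eq_mul,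
      mul_one, mul_one, ← ENNReal.coe_add, ← Real.toNNReal_add hγ0' h1γ]
    norm_num
  haveI := hQprob
  have hQsigned : (γ.toNNReal • Pg + (1 - γ).toNNReal • Pn).toSignedMeasure
      = γ • Pg.toSignedMeasure + (1 - γ) • Pn.toSignedMeasure := by
    rw [Measure.toSignedMeasure_add, Measure.toSignedMeasure_smul,
      Measure.toSignedMeasure_smul, NNReal.smul_def, NNReal.smul_def,
      Real.coe_toNNReal _ hγ0', Real.coe_toNNReal _ h1γ]
  have hQint : ∀ D : X → ℝ, Measurable D → (∀ x, D x ∈ Set.Icc 0 a) →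
      (∫ x, D x ∂(γ.toNNReal • Pg + (1 - γ).toNNReal • Pn))
        = γ * (∫ x, D x ∂Pg) + (1 - γ) * (∫ x, D x ∂Pn) := by
    intro D hD hr
    rw [integral_add_measure (integrable_of_mem_Icc _ hD hr) (integrable_of_mem_Icc _ hD hr),
      integral_smul_nnreal_measure, integral_smul_nnreal_measure,
      NNReal.smul_def, NNReal.smul_def, Real.coe_toNNReal _ hγ0', Real.coe_toNNReal _ h1γ,
      smul_eq_mul, smul_eq_mul]
  have hsetseq : {v : ℝ | ∃ D : X → ℝ, Measurable D ∧ (∀ x, D x ∈ Set.Icc 0 a) ∧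
        v = (∫ x, D x ∂Pp) + γ * (∫ x, (a - D x) ∂Pg) + (1 - γ) * (∫ x, (a - D x) ∂Pn)}
      = {v : ℝ | ∃ D : X → ℝ, Measurable D ∧ (∀ x, D x ∈ Set.Icc 0 a) ∧
        v = a + (∫ x, D x ∂Pp) - ∫ x, D x ∂(γ.toNNReal • Pg + (1 - γ).toNNReal • Pn)} := by
    ext v
    constructor
    · rintro ⟨D, hD, hr, rfl⟩
      exact ⟨D, hD, hr, by rw [part1 D hD hr, hQint D hD hr]⟩
    · rintro ⟨D, hD, hr, rfl⟩
      exact ⟨D, hD, hr, by rw [part1 D hD hr, hQint D hD hr]⟩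
  rw [hsetseq, ← hQsigned]
  exact key_glb Pp _ a ha
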